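/- For every nonempty T ⊆ N, the Shapley–Taylor interaction index of the unanimity game u_T is given by: I_S(u_T) = 1 if S = T and |S| < k; I_S(u_T) = 0 if S ≠ T and |S| < k; I_S(u_T) = 1/C(|T|, k) if |S| = k and S ⊆ T; and I_S(u_T) = 0 if |S| = k and S ⊄ T. -/
import Mathlib


/-- Discrete derivative of a game `v` with respect to the set `S`, evaluated at `T`. -/
noncomputable def ddiff {n : ℕ} (S : Finset (Fin n)) (v : Finset (Fin n) → ℝ)
    (T : Finset (Fin n)) : ℝ :=
  ∑ W ∈ S.powerset, (-1 : ℝ) ^ (S.card - W.card) * v (W ∪ T)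

/-- The set `π^S` of players that precede every member of `S` in the ordering `π`
(player at position `p` is `π p`, so `i` precedes `j` iff `π.symm i < π.symm j`). -/
def preceders {n : ℕ} (π : Equiv.Perm (Fin n)) (S : Finset (Fin n)) : Finset (Fin n) :=
  Finset.univ.filter fun j => ∀ i ∈ S, π.symm j < π.symm i

/-- Per-permutation Shapley-Taylor value `I_{S,π}(v)` for order of explanation `k`. -/
noncomputable def stvPerm {n : ℕ} (k : ℕ) (S : Finset (Fin n)) (π : Equiv.Perm (Fin n))
    (v : Finset (Fin n) → ℝ) : ℝ :=
  if S.card < k then ddiff S v ∅ else ddiff S v (preceders π S)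

/-- The Shapley-Taylor interaction index `I_S(v)`: the average of `I_{S,π}(v)`
over all orderings `π`. -/
noncomputable def stv {n : ℕ} (k : ℕ) (S : Finset (Fin n)) (v : Finset (Fin n) → ℝ) : ℝ :=
  (1 / (Nat.factorial n : ℝ)) * ∑ π : Equiv.Perm (Fin n), stvPerm k S π v

/-- The unanimity game `u_T`: worth `1` exactly when all of `T` is present. -/
noncomputable def uGame {n : ℕ} (T : Finset (Fin n)) : Finset (Fin n) → ℝ :=
  fun S => if T ⊆ S then 1 else 0

section Aux
open Finset Equiv
variable {n : ℕ}

private lemma sum_pow_sub (A : Finset (Fin n)) :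
    ∑ V ∈ A.powerset, (-1:ℝ)^(A.card - V.card) = if A = ∅ then 1 else 0 := by
  have h1 : ∀ V ∈ A.powerset, (-1:ℝ)^(A.card - V.card) = (-1)^A.card * (-1)^V.card := by
    intro V hV
    have hle : V.card ≤ A.card := card_le_card (mem_powerset.1 hV)
    calc (-1:ℝ)^(A.card - V.card)
        = (-1:ℝ)^(A.card - V.card) * ((-1:ℝ)^2)^V.card := by
          rw [neg_one_sq, one_pow, mul_one]
      _ = (-1:ℝ)^(A.card - V.card + 2*V.card) := by rw [pow_add, pow_mul]
      _ = (-1:ℝ)^(A.card + V.card) := by congr 1; omega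
      _ = (-1:ℝ)^A.card * (-1:ℝ)^V.card := pow_add _ _ _
  rw [Finset.sum_congr rfl h1, ← Finset.mul_sum]
  have h2 : ∑ V ∈ A.powerset, (-1:ℝ)^V.card
      = ((∑ V ∈ A.powerset, (-1:ℤ)^V.card : ℤ) : ℝ) := by push_cast; rfl
  rw [h2, Finset.sum_powerset_neg_one_pow_card]
  by_cases hA : A = ∅ <;> simp [hA]

private lemma sum_ind (S B : Finset (Fin n)) (hB : B ⊆ S) :
    ∑ W ∈ S.powerset, (-1:ℝ)^(S.card - W.card) * (if B ⊆ W then 1 else 0)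
      = if B = S then 1 else 0 := by
  have h1 : ∀ W ∈ S.powerset, (-1:ℝ)^(S.card - W.card) * (if B ⊆ W then 1 else 0)
      = if B ⊆ W then (-1:ℝ)^(S.card - W.card) else 0 := by
    intro W _; split <;> simp
  rw [Finset.sum_congr rfl h1, ← Finset.sum_filter]
  have h2 : ∑ W ∈ S.powerset.filter (fun W => B ⊆ W), (-1:ℝ)^(S.card - W.card)
      = ∑ V ∈ (S \ B).powerset, (-1:ℝ)^((S\B).card - V.card) := by
    apply Finset.sum_nbij' (fun W => W \ B) (fun V => V ∪ B)
    · intro W hW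
      rw [mem_filter, mem_powerset] at hW
      exact mem_powerset.2 (sdiff_subset_sdiff hW.1 Subset.rfl)
    · intro V hV
      rw [mem_powerset] at hV
      rw [mem_filter, mem_powerset]
      exact ⟨union_subset (hV.trans sdiff_subset) hB, subset_union_right⟩
    · intro W hW
      rw [mem_filter, mem_powerset] at hW
      exact sdiff_union_of_subset hW.2
    · intro V hV
      rw [mem_powerset] at hV
      exact union_sdiff_cancel_right (Finset.sdiff_disjoint.mono_left hV)
    · intro W hW
      rw [mem_filter, mem_powerset] at hW
      congr 1
      have hc1 : B.card ≤ W.card := card_le_card hW.2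
      have hc2 : W.card ≤ S.card := card_le_card hW.1
      rw [card_sdiff_of_subset hB, card_sdiff_of_subset hW.2]
      omega
  rw [h2, sum_pow_sub]
  have : S \ B = ∅ ↔ B = S := by
    rw [sdiff_eq_empty_iff_subset]
    exact ⟨fun h => (subset_antisymm hB h).symm ▸ rfl, fun h => h ▸ Subset.rfl⟩
  simp only [this]

private lemma ddiff_uGame (S T X : Finset (Fin n)) (hX : ∀ x ∈ X, x ∉ S) :
    ddiff S (uGame T) X = if S ⊆ T ∧ T \ S ⊆ X then 1 else 0 := by
  unfold ddiff uGame
  have key : ∀ W ∈ S.powerset, (T ⊆ W ∪ X ↔ (T ∩ S ⊆ W ∧ T \ S ⊆ X)) := by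
    intro W hW
    rw [mem_powerset] at hW
    constructor
    · intro h
      constructor
      · intro x hx
        rw [mem_inter] at hx
        rcases mem_union.1 (h hx.1) with h' | h'
        · exact h'
        · exact absurd hx.2 (hX x h')
      · intro x hx
        rw [mem_sdiff] at hx
        rcases mem_union.1 (h hx.1) with h' | h'
        · exact absurd (hW h') hx.2
        · exact h'
    · rintro ⟨h1, h2⟩ x hx
      by_cases hxS : x ∈ S
      · exact mem_union_left _ (h1 (mem_inter.2 ⟨hx, hxS⟩))
      · exact mem_union_right _ (h2 (mem_sdiff.2 ⟨hx, hxS⟩))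
  have h1 : ∀ W ∈ S.powerset,
      (-1:ℝ)^(S.card - W.card) * (if T ⊆ W ∪ X then 1 else 0)
      = ((-1:ℝ)^(S.card - W.card) * (if T ∩ S ⊆ W then 1 else 0))
        * (if T \ S ⊆ X then 1 else 0) := by
    intro W hW
    rw [mul_assoc]
    congr 1
    rw [if_congr (key W hW) rfl rfl]
    by_cases hA : T ∩ S ⊆ W <;> by_cases hB : T \ S ⊆ X <;> simp [hA, hB]
  rw [Finset.sum_congr rfl h1, ← Finset.sum_mul, sum_ind S (T ∩ S) inter_subset_right]
  have h3 : T ∩ S = S ↔ S ⊆ T := by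
    constructor
    · intro h; rw [← h]; exact inter_subset_left
    · intro h; exact inter_eq_right.2 h
  by_cases hA : S ⊆ T <;> by_cases hB : T \ S ⊆ X <;>
    simp [h3, hA, hB]

private lemma exists_top (σ : Fin n → Fin n) (hσ : Function.Injective σ) :
    ∀ (k : ℕ) (B : Finset (Fin n)), k ≤ B.card →
      ∃ C, C ⊆ B ∧ C.card = k ∧ ∀ x ∈ C, ∀ y ∈ B, y ∉ C → σ y < σ x := by
  intro k
  induction k with
  | zero => intro B _; exact ⟨∅, empty_subset _, rfl, by simp⟩
  | succ k ih =>
    intro B hB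
    have hBne : B.Nonempty := card_pos.mp (by omega)
    obtain ⟨M, hM, hMmax⟩ := B.exists_max_image σ hBne
    obtain ⟨C, hCB, hCcard, hCtop⟩ := ih (B.erase M) (by rw [card_erase_of_mem hM]; omega)
    refine ⟨insert M C, ?_, ?_, ?_⟩
    · exact insert_subset hM (hCB.trans (erase_subset _ _))
    · rw [card_insert_of_notMem (fun h => (mem_erase.1 (hCB h)).1 rfl), hCcard]
    · intro x hx y hy hyC
      have hyM : y ≠ M := fun h => hyC (h ▸ mem_insert_self M C)
      have hyE : y ∈ B.erase M := mem_erase.2 ⟨hyM, hy⟩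
      rcases mem_insert.1 hx with rfl | hxC
      · exact lt_of_le_of_ne (hMmax y hy) (fun h => hyM (hσ h))
      · exact hCtop x hxC y hyE (fun h => hyC (mem_insert_of_mem h))

private lemma sigmaTop_unique {σ : Fin n → Fin n} {T C C' : Finset (Fin n)}
    (hcard : C.card = C'.card)
    (h1 : ∀ x ∈ C, ∀ y ∈ T, y ∉ C → σ y < σ x)
    (h2 : ∀ x ∈ C', ∀ y ∈ T, y ∉ C' → σ y < σ x)
    (hC : C ⊆ T) (hC' : C' ⊆ T) : C = C' := by
  by_contra hne
  have d1 : (C \ C').Nonempty := by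
    rw [sdiff_nonempty]
    intro hsub
    exact hne (Finset.eq_of_subset_of_card_le hsub (le_of_eq hcard.symm))
  have d2 : (C' \ C).Nonempty := by
    rw [sdiff_nonempty]
    intro hsub
    exact hne (Finset.eq_of_subset_of_card_le hsub (le_of_eq hcard)).symm
  obtain ⟨x, hx⟩ := d1
  obtain ⟨y, hy⟩ := d2
  rw [mem_sdiff] at hx hy
  exact lt_asymm (h1 x hx.1 y (hC' hy.1) hy.2) (h2 y hy.1 x (hC hx.1) hx.2)

private lemma sum_ind_top (T : Finset (Fin n)) (k : ℕ) (hk : k ≤ T.card)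
    (σ : Equiv.Perm (Fin n)) :
    ∑ S' ∈ T.powersetCard k,
      (if ∀ j ∈ T \ S', ∀ i ∈ S', σ j < σ i then (1:ℝ) else 0) = 1 := by
  obtain ⟨C, hCT, hCcard, hCtop⟩ := exists_top σ σ.injective k T hk
  have hmemC : C ∈ T.powersetCard k := mem_powersetCard.2 ⟨hCT, hCcard⟩
  have hcong : ∀ S' ∈ T.powersetCard k,
      (if ∀ j ∈ T \ S', ∀ i ∈ S', σ j < σ i then (1:ℝ) else 0)
      = if S' = C then 1 else 0 := by
    intro S' hS'
    obtain ⟨hS'T, hS'card⟩ := mem_powersetCard.1 hS'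
    apply if_congr _ rfl rfl
    constructor
    · intro h
      refine sigmaTop_unique (σ := σ) (T := T) (hS'card.trans hCcard.symm) ?_ hCtop hS'T hCT
      intro x hx y hyT hyS'
      exact h y (mem_sdiff.2 ⟨hyT, hyS'⟩) x hx
    · rintro rfl j hj i hi
      rw [mem_sdiff] at hj
      exact hCtop i hi j hj.1 hj.2
  rw [Finset.sum_congr rfl hcong, Finset.sum_ite_eq' (T.powersetCard k) C (fun _ => (1:ℝ)),
    if_pos hmemC]

private lemma sum_perm_eq (k : ℕ) (T S1 S2 : Finset (Fin n))
    (h1 : S1 ∈ T.powersetCard k) (h2 : S2 ∈ T.powersetCard k) :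
    ∑ σ : Equiv.Perm (Fin n), (if ∀ j ∈ T \ S1, ∀ i ∈ S1, σ j < σ i then (1:ℝ) else 0)
    = ∑ σ : Equiv.Perm (Fin n), (if ∀ j ∈ T \ S2, ∀ i ∈ S2, σ j < σ i then (1:ℝ) else 0) := by
  classical
  obtain ⟨hS1T, hS1c⟩ := mem_powersetCard.1 h1
  obtain ⟨hS2T, hS2c⟩ := mem_powersetCard.1 h2
  have key : ∀ (S' : Finset (Fin n)), S' ⊆ T →
      Fintype.card {x : {y : Fin n // y ∈ T} // (↑x : Fin n) ∈ S'} = S'.card := by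
    intro S' hS'
    rw [Fintype.card_congr ((Equiv.subtypeSubtypeEquivSubtypeInter (· ∈ T) (· ∈ S')).trans
      (Equiv.subtypeEquivRight (fun x => ⟨fun h => h.2, fun h => ⟨hS' h, h⟩⟩)))]
    exact Fintype.card_coe _
  have hcard : Fintype.card {x : {y : Fin n // y ∈ T} // (↑x : Fin n) ∈ S2}
      = Fintype.card {x : {y : Fin n // y ∈ T} // (↑x : Fin n) ∈ S1} := by
    rw [key S1 hS1T, key S2 hS2T, hS1c, hS2c]
  set ρT : Equiv.Perm {y : Fin n // y ∈ T} :=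
    Equiv.extendSubtype (Fintype.equivOfCardEq hcard) with hρT
  set ρ : Equiv.Perm (Fin n) :=
    Equiv.Perm.subtypeCongr (p := (· ∈ T)) ρT (Equiv.refl _) with hρ
  have hmemT : ∀ x (hx : x ∈ T), ρ x = ↑(ρT ⟨x, hx⟩) := by
    intro x hx
    rw [hρ, Equiv.Perm.subtypeCongr.left_apply _ _ hx]
  have hT : ∀ x ∈ T, ρ x ∈ T := by
    intro x hx; rw [hmemT x hx]; exact (ρT ⟨x, hx⟩).2
  have hS2toS1 : ∀ x ∈ S2, ρ x ∈ S1 := by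
    intro x hx
    have hxT : x ∈ T := hS2T hx
    rw [hmemT x hxT]
    exact Equiv.extendSubtype_mem (Fintype.equivOfCardEq hcard) ⟨x, hxT⟩ hx
  have hTdiff : ∀ x ∈ T \ S2, ρ x ∈ T \ S1 := by
    intro x hx
    rw [mem_sdiff] at hx ⊢
    refine ⟨hT x hx.1, ?_⟩
    rw [hmemT x hx.1]
    exact Equiv.extendSubtype_not_mem (Fintype.equivOfCardEq hcard) ⟨x, hx.1⟩ hx.2
  have himg1 : S2.image ρ = S1 := by
    apply Finset.eq_of_subset_of_card_le
    · intro y hy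
      obtain ⟨x, hx, rfl⟩ := mem_image.1 hy
      exact hS2toS1 x hx
    · rw [Finset.card_image_of_injective _ ρ.injective, hS1c, hS2c]
  have himg2 : (T \ S2).image ρ = T \ S1 := by
    apply Finset.eq_of_subset_of_card_le
    · intro y hy
      obtain ⟨x, hx, rfl⟩ := mem_image.1 hy
      exact hTdiff x hx
    · rw [Finset.card_image_of_injective _ ρ.injective, card_sdiff_of_subset hS1T, card_sdiff_of_subset hS2T,
        hS1c, hS2c]
  have hsum := Equiv.sum_comp (Equiv.mulRight ρ)
    (fun σ : Equiv.Perm (Fin n) =>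
      if ∀ j ∈ T \ S2, ∀ i ∈ S2, σ j < σ i then (1:ℝ) else 0)
  rw [← hsum]
  apply Finset.sum_congr rfl
  intro σ _
  apply if_congr _ rfl rfl
  simp only [Equiv.coe_mulRight, Equiv.Perm.mul_apply]
  constructor
  · intro h j hj i hi
    have hj' : ρ j ∈ T \ S1 := by rw [← himg2]; exact mem_image_of_mem ρ hj
    have hi' : ρ i ∈ S1 := by rw [← himg1]; exact mem_image_of_mem ρ hi
    exact h _ hj' _ hi'
  · intro h j hj i hi
    rw [← himg2] at hj
    rw [← himg1] at hi
    obtain ⟨j', hj', rfl⟩ := mem_image.1 hj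
    obtain ⟨i', hi', rfl⟩ := mem_image.1 hi
    exact h j' hj' i' hi'

private lemma count_eq (T S : Finset (Fin n)) (k : ℕ) (hST : S ⊆ T) (hcard : S.card = k) :
    (T.card.choose k : ℝ) *
      (∑ σ : Equiv.Perm (Fin n), if ∀ j ∈ T \ S, ∀ i ∈ S, σ j < σ i then (1:ℝ) else 0)
    = (n.factorial : ℝ) := by
  have hk : k ≤ T.card := hcard ▸ card_le_card hST
  have hmem : S ∈ T.powersetCard k := mem_powersetCard.2 ⟨hST, hcard⟩
  have h1 : ∑ S' ∈ T.powersetCard k, ∑ σ : Equiv.Perm (Fin n),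
      (if ∀ j ∈ T \ S', ∀ i ∈ S', σ j < σ i then (1:ℝ) else 0) = (n.factorial : ℝ) := by
    rw [Finset.sum_comm]
    calc ∑ σ : Equiv.Perm (Fin n), ∑ S' ∈ T.powersetCard k,
        (if ∀ j ∈ T \ S', ∀ i ∈ S', σ j < σ i then (1:ℝ) else 0)
        = ∑ _σ : Equiv.Perm (Fin n), (1:ℝ) :=
          Finset.sum_congr rfl (fun σ _ => sum_ind_top T k hk σ)
      _ = (n.factorial : ℝ) := by
          simp [Finset.card_univ, Fintype.card_perm, Fintype.card_fin]
  calc (T.card.choose k : ℝ) *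
      (∑ σ : Equiv.Perm (Fin n), if ∀ j ∈ T \ S, ∀ i ∈ S, σ j < σ i then (1:ℝ) else 0)
      = ∑ S' ∈ T.powersetCard k, ∑ σ : Equiv.Perm (Fin n),
        (if ∀ j ∈ T \ S', ∀ i ∈ S', σ j < σ i then (1:ℝ) else 0) := by
        rw [Finset.sum_congr rfl (fun S' hS' => sum_perm_eq k T S' S hS' hmem),
          Finset.sum_const, Finset.card_powersetCard, nsmul_eq_mul]
    _ = (n.factorial : ℝ) := h1

end Aux
open Finset Equiv

/-- The Shapley-Taylor interaction index of the unanimity game `u_T`: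
`1` if `S = T` with `|S| < k`; `0` if `S ≠ T` with `|S| < k`; `1/C(|T|, k)` if `|S| = k`
and `S ⊆ T`; and `0` if `|S| = k` and `S ⊄ T`. -/
theorem stv_uGame {n k : ℕ} (hk1 : 1 ≤ k) (hkn : k ≤ n)
    (T : Finset (Fin n)) (hT : T.Nonempty) (S : Finset (Fin n)) (hS : S.Nonempty) :
    (S.card < k →
      (S = T → stv k S (uGame T) = 1) ∧ (S ≠ T → stv k S (uGame T) = 0)) ∧
    (S.card = k →
      (S ⊆ T → stv k S (uGame T) = 1 / (T.card.choose k : ℝ)) ∧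
      (¬ S ⊆ T → stv k S (uGame T) = 0)) := by
  
  have hfac : (n.factorial : ℝ) ≠ 0 := Nat.cast_ne_zero.2 (Nat.factorial_ne_zero n)
  constructor
  · intro hlt
    have hconst : ∀ π : Equiv.Perm (Fin n), stvPerm k S π (uGame T)
        = if S ⊆ T ∧ T \ S ⊆ (∅ : Finset (Fin n)) then 1 else 0 := by
      intro π
      rw [stvPerm, if_pos hlt, ddiff_uGame S T ∅ (fun x hx => absurd hx (notMem_empty x))]
    have hsum : stv k S (uGame T) = if S ⊆ T ∧ T \ S ⊆ (∅ : Finset (Fin n)) then 1 else 0 := by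
      rw [stv, Finset.sum_congr rfl (fun π _ => hconst π), Finset.sum_const,
        Finset.card_univ, Fintype.card_perm, Fintype.card_fin, nsmul_eq_mul]
      field_simp
    constructor
    · rintro rfl
      rw [hsum, if_pos ⟨Subset.rfl, by simp⟩]
    · intro hne
      rw [hsum, if_neg]
      rintro ⟨h1, h2⟩
      exact hne (subset_antisymm h1 (sdiff_eq_empty_iff_subset.1 (subset_empty.1 h2)))
  · intro hkS
    have hnotlt : ¬ S.card < k := by omega
    have hterm : ∀ π : Equiv.Perm (Fin n), stvPerm k S π (uGame T)
        = if S ⊆ T ∧ T \ S ⊆ preceders π S then 1 else 0 := by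
      intro π
      rw [stvPerm, if_neg hnotlt]
      apply ddiff_uGame
      intro x hx hxS
      exact lt_irrefl _ ((Finset.mem_filter.1 hx).2 x hxS)
    constructor
    · intro hST
      have hkT : k ≤ T.card := hkS ▸ card_le_card hST
      have hchoose : (T.card.choose k : ℝ) ≠ 0 :=
        Nat.cast_ne_zero.2 (Nat.choose_pos hkT).ne'
      have hterm2 : ∀ π : Equiv.Perm (Fin n), stvPerm k S π (uGame T)
          = if ∀ j ∈ T \ S, ∀ i ∈ S, π.symm j < π.symm i then (1:ℝ) else 0 := by
        intro π
        rw [hterm π]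
        apply if_congr _ rfl rfl
        constructor
        · intro h j hj i hi
          exact (Finset.mem_filter.1 (h.2 hj)).2 i hi
        · intro h
          exact ⟨hST, fun j hj =>
            Finset.mem_filter.2 ⟨mem_univ _, fun i hi => h j hj i hi⟩⟩
      have hre : ∑ π : Equiv.Perm (Fin n),
          (if ∀ j ∈ T \ S, ∀ i ∈ S, π.symm j < π.symm i then (1:ℝ) else 0)
        = ∑ σ : Equiv.Perm (Fin n),
          (if ∀ j ∈ T \ S, ∀ i ∈ S, σ j < σ i then (1:ℝ) else 0) :=
        Equiv.sum_comp (Equiv.inv (Equiv.Perm (Fin n)))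
          (fun σ : Equiv.Perm (Fin n) =>
            if ∀ j ∈ T \ S, ∀ i ∈ S, σ j < σ i then (1:ℝ) else 0)
      have hc := count_eq T S k hST hkS
      have hsig : (∑ σ : Equiv.Perm (Fin n),
          (if ∀ j ∈ T \ S, ∀ i ∈ S, σ j < σ i then (1:ℝ) else 0))
          = (n.factorial : ℝ) / (T.card.choose k : ℝ) := by
        rw [eq_div_iff hchoose, mul_comm]
        exact hc
      rw [stv, Finset.sum_congr rfl (fun π _ => hterm2 π), hre, hsig]
      field_simp
    · intro hST
      have hzero : ∀ π : Equiv.Perm (Fin n), stvPerm k S π (uGame T) = 0 := by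
        intro π
        rw [hterm π, if_neg (fun h => hST h.1)]
      rw [stv, Finset.sum_congr rfl (fun π _ => hzero π), Finset.sum_const, smul_zero,
        mul_zero]
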